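/- Assume the continuum hypothesis 2^ℵ₀ = ℵ₁ and that K satisfies hypotheses (H). Let M be a K-ℵ₁-saturated L-structure of cardinality ℵ₁. Then every L-structure N of cardinality at most ℵ₁, all of whose substructures of cardinality less than ℵ₁ belong to K, admits an embedding into M. -/

import Mathlib

open FirstOrder FirstOrder.Language CategoryTheory Cardinal Set

namespace FraisseFreeAmalg

variable (L : FirstOrder.Language.{0, 0})

/-- The class is closed under isomorphism. -/
def IsoClosed (K : Set (Bundled.{0} L.Structure)) : Prop :=
  ∀ A ∈ K, ∀ B : Bundled.{0} L.Structure, Nonempty (A ≃[L] B) → B ∈ K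

/-- All members of the class are finite or countably infinite. -/
def SmallMembers (K : Set (Bundled.{0} L.Structure)) : Prop :=
  ∀ A ∈ K, Countable A

/-- Condition (1) of (H): universal axiomatizability. -/
def UnivAx (K : Set (Bundled.{0} L.Structure)) : Prop :=
  ∀ A : Bundled.{0} L.Structure, Countable A → A ∉ K →
    ∃ (n : ℕ) (φ : L.Formula (Fin n)) (a : Fin n → A),
      φ.IsQF ∧ φ.Realize a ∧ ∀ B ∈ K, ∀ b : Fin n → B, ¬ φ.Realize b

/-- Condition (2) of (H): quantifier elimination. -/
def QElim (K : Set (Bundled.{0} L.Structure)) : Prop :=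
  ∀ (m n : ℕ) (φ : L.Formula (Fin m ⊕ Fin n)), φ.IsQF →
    ∀ A ∈ K, ∀ (a : Fin m → A) (b : Fin n → A), φ.Realize (Sum.elim a b) →
      ∃ ψ : L.Formula (Fin m), ψ.IsQF ∧ ψ.Realize a ∧
        ∀ A' ∈ K, ∀ a' : Fin m → A', ψ.Realize a' →
          ∃ B' ∈ K, ∃ (i : A' ↪[L] B') (b' : Fin n → B'),
            φ.Realize (Sum.elim (fun k => i (a' k)) b')

/-- `D` together with `iA, iB` is a free amalgam of `A` and `B` over `C` in the class `K`. -/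
def IsFreeAmalgam (K : Set (Bundled.{0} L.Structure))
    (C A B : Bundled.{0} L.Structure) (cA : C ↪[L] A) (cB : C ↪[L] B)
    (D : Bundled.{0} L.Structure) (iA : A ↪[L] D) (iB : B ↪[L] D) : Prop :=
  (∀ c : C, iA (cA c) = iB (cB c)) ∧
  (Set.range iA ∩ Set.range iB = Set.range fun c : C => iA (cA c)) ∧
  Substructure.closure L (Set.range iA ∪ Set.range iB) = ⊤ ∧
  ∀ D' ∈ K, ∀ (φA : A →[L] D') (φB : B →[L] D'),
    (∀ c : C, φA (cA c) = φB (cB c)) →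
    ∃! φ : D →[L] D',
      (∀ a : A, φ (iA a) = φA a) ∧ (∀ b : B, φ (iB b) = φB b)

/-- Condition (3) of (H): free amalgamation (together with agreement on the
substructures generated by the constants). -/
def FreeAmalg (K : Set (Bundled.{0} L.Structure)) : Prop :=
  (∀ A ∈ K, ∀ B ∈ K,
      Nonempty ((⊥ : L.Substructure A) ≃[L] (⊥ : L.Substructure B))) ∧
  ∀ (C A B : Bundled.{0} L.Structure), C ∈ K → A ∈ K → B ∈ K →
    ∀ (cA : C ↪[L] A) (cB : C ↪[L] B),
      ∃ D ∈ K, ∃ (iA : A ↪[L] D) (iB : B ↪[L] D),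
        IsFreeAmalgam L K C A B cA cB D iA iB

/-- Condition (4) of (H): generic element. -/
def GenericElem (K : Set (Bundled.{0} L.Structure)) : Prop :=
  ∃ X ∈ K, ∃ x : X, Substructure.closure L ({x} : Set X) = ⊤ ∧
    ∀ A ∈ K, ∀ a : A, ∃ φ : X →[L] A, φ x = a

/-- Condition (5) of (H): algebraically independent 3-amalgamation. -/
def ThreeAmalg (K : Set (Bundled.{0} L.Structure)) : Prop :=
  ∀ (E A B : Bundled.{0} L.Structure) (Bb Dd : Fin 2 → Bundled.{0} L.Structure),
    E ∈ K → A ∈ K → B ∈ K → (∀ i, Bb i ∈ K) → (∀ i, Dd i ∈ K) →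
    ∀ (eA : E ↪[L] A) (eB : ∀ i, E ↪[L] Bb i)
      (aD : ∀ i, A ↪[L] Dd i) (bD : ∀ i, Bb i ↪[L] Dd i)
      (bB : ∀ i, Bb i ↪[L] B),
      (∀ i, ∀ e : E, aD i (eA e) = bD i (eB i e)) →
      (∀ e : E, bB 0 (eB 0 e) = bB 1 (eB 1 e)) →
      (∀ i, Set.range (aD i) ∩ Set.range (bD i) =
        Set.range fun e : E => aD i (eA e)) →
      (Set.range (bB 0) ∩ Set.range (bB 1) =
        Set.range fun e : E => bB 0 (eB 0 e)) →
      ∃ D ∈ K, ∃ (dD : ∀ i, Dd i ↪[L] D) (jB : B ↪[L] D),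
        (∀ i, ∀ b : Bb i, dD i (bD i b) = jB (bB i b)) ∧
        (∀ a : A, dD 0 (aD 0 a) = dD 1 (aD 1 a)) ∧
        (∀ i, Set.range (dD i) ∩ Set.range jB =
          Set.range fun b : Bb i => dD i (bD i b)) ∧
        (Set.range (dD 0) ∩ Set.range (dD 1) =
          Set.range fun a : A => dD 0 (aD 0 a))

/-- The hypotheses (H) on the class `K`. -/
structure HypH (K : Set (Bundled.{0} L.Structure)) : Prop where
  small : SmallMembers L K
  isoClosed : IsoClosed L K
  univAx : UnivAx L K
  qElim : QElim L K
  freeAmalg : FreeAmalg L K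
  generic : GenericElem L K
  threeAmalg : ThreeAmalg L K

/-- `M` is `K`-ℵ₁-saturated. -/
def KSat (K : Set (Bundled.{0} L.Structure)) (M : Type) [L.Structure M] : Prop :=
  (∀ S : L.Substructure M, Cardinal.mk S < Cardinal.aleph 1 → (Bundled.of (↥S) : Bundled L.Structure) ∈ K) ∧
  ∀ U ∈ K, ∀ B ∈ K, ∀ (f₀ : U ↪[L] M) (f₁ : U ↪[L] B),
    ∃ g : B ↪[L] M, ∀ u : U, g (f₁ u) = f₀ u

/-- Γ-independence of countable substructures of `M`. -/
def GammaIndep (M : Type) [L.Structure M] (E A B : L.Substructure M) : Prop :=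
  ∀ D' : L.Substructure M, Countable D' →
    ∀ (φA : A →[L] D') (φB : B →[L] D'),
      (∀ (x : M) (hA : x ∈ A) (hB : x ∈ B), x ∈ E → φA ⟨x, hA⟩ = φB ⟨x, hB⟩) →
      ∃! φ : ↥(A ⊔ B) →[L] D',
        (∀ (x : M) (h : x ∈ A), φ ⟨x, (le_sup_left : A ≤ A ⊔ B) h⟩ = φA ⟨x, h⟩) ∧
        (∀ (x : M) (h : x ∈ B), φ ⟨x, (le_sup_right : B ≤ A ⊔ B) h⟩ = φB ⟨x, h⟩)

/-- M-independence: forcing base monotonicity on algebraic independence. -/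
def MIndep (M : Type) [L.Structure M] (E A B : L.Substructure M) : Prop :=
  ∀ C : L.Substructure M, E ≤ C → C ≤ B → (A ⊔ C) ⊓ B = C


/-! ### Auxiliary material for statement_1 -/

section Aux

open FirstOrder.Language.Structure

variable {L' : FirstOrder.Language.{0, 0}} {N : Type} [L'.Structure N]

lemma ord_lt_add_one (α : Ordinal) : α < α + 1 := by
  rw [Ordinal.add_one_eq_succ]; exact Order.lt_succ α

/-- The chain of substructures generated by initial segments of an enumeration. -/
def SS (e : Ordinal → N) (α : Ordinal) : L'.Substructure N :=
  Substructure.closure L' (e '' Set.Iio α)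

lemma SS_mono (e : Ordinal → N) : Monotone (SS (L' := L') e) := fun _ _ h =>
  Substructure.closure_mono (Set.image_mono  (Set.Iio_subset_Iio h))

lemma mem_SS_of_lt (e : Ordinal → N) {β α : Ordinal} (h : β < α) :
    e β ∈ SS (L' := L') e α :=
  Substructure.subset_closure (Set.mem_image_of_mem e h)

lemma SS_gens_dense (e : Ordinal → N) (α : Ordinal) :
    Substructure.closure L' {x : ↥(SS (L' := L') e α) | (x : N) ∈ e '' Set.Iio α} = ⊤ := by
  rw [eq_top_iff]
  rintro x -
  have hx : (x : N) ∈ Substructure.closure L' (e '' Set.Iio α) := x.2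
  have hsub : Substructure.closure L' (e '' Set.Iio α) ≤
      Substructure.map (SS (L' := L') e α).subtype.toHom
        (Substructure.closure L' {y : ↥(SS (L' := L') e α) | (y : N) ∈ e '' Set.Iio α}) := by
    rw [Substructure.closure_le]
    rintro y ⟨β, hβ, rfl⟩
    exact ⟨⟨e β, mem_SS_of_lt e hβ⟩, Substructure.subset_closure ⟨β, hβ, rfl⟩, rfl⟩
  obtain ⟨y, hy, hyx⟩ := hsub hx
  rwa [show y = x from Subtype.ext hyx] at hy

lemma bot_bot_eq_top (X : Type) [L'.Structure X] :
    (⊥ : L'.Substructure ↥(⊥ : L'.Substructure X)) = ⊤ := by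
  rw [eq_top_iff]
  rintro ⟨x, hx⟩ -
  have hx' : x ∈ Substructure.closure L' (∅ : Set X) := by
    rwa [Substructure.closure_empty]
  have key : ∃ h : x ∈ (⊥ : L'.Substructure X),
      (⟨x, h⟩ : ↥(⊥ : L'.Substructure X)) ∈ (⊥ : L'.Substructure ↥(⊥ : L'.Substructure X)) := by
    refine Substructure.closure_induction hx' (fun y hy => absurd hy (Set.notMem_empty y)) ?_
    intro n F xs h
    choose h1 h2 using h
    exact ⟨Substructure.fun_mem _ F xs h1,
      Substructure.fun_mem (⊥ : L'.Substructure ↥(⊥ : L'.Substructure X)) F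
        (fun i => ⟨xs i, h1 i⟩) h2⟩
  exact key.2

variable (M : Type) [L'.Structure M]

/-- Extension property at a stage. -/
def ExtProp (e : Ordinal → N) (α : Ordinal) (v : ∀ β, β < α → M) : Prop :=
  ∃ g : ↥(SS (L' := L') e (α + 1)) ↪[L'] M, ∀ β (hβ : β < α),
    g ⟨e β, mem_SS_of_lt e (hβ.trans (ord_lt_add_one α))⟩ = v β hβ

open Classical in
/-- A transfinite sequence of images in `M`, chosen by recursion. -/
noncomputable def hseq [Nonempty M] (e : Ordinal → N) : Ordinal → M :=
  Ordinal.lt_wf.fix fun α prev =>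
    if hQ : ExtProp (L' := L') M e α prev then
      hQ.choose ⟨e α, mem_SS_of_lt e (ord_lt_add_one α)⟩
    else Classical.arbitrary M

open Classical in
lemma hseq_eq [Nonempty M] (e : Ordinal → N) (α : Ordinal) :
    hseq (L' := L') M e α =
      if hQ : ExtProp (L' := L') M e α (fun β _ => hseq (L' := L') M e β) then
        hQ.choose ⟨e α, mem_SS_of_lt e (ord_lt_add_one α)⟩
      else Classical.arbitrary M :=
  Ordinal.lt_wf.fix_eq _ α

lemma inv_all [Nonempty M] (e : Ordinal → N) {o1 : Ordinal} (ho1 : Order.IsSuccLimit o1)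
    (hbot : Nonempty (↥(SS (L' := L') e 0) ↪[L'] M))
    (hext : ∀ α, α < o1 → ∀ g : ↥(SS (L' := L') e α) ↪[L'] M,
      ∃ g' : ↥(SS (L' := L') e (α + 1)) ↪[L'] M,
        ∀ (x : N) (hx : x ∈ SS (L' := L') e α),
          g' ⟨x, SS_mono e (ord_lt_add_one α).le hx⟩ = g ⟨x, hx⟩) :
    ∀ α, α ≤ o1 → ∃ g : ↥(SS (L' := L') e α) ↪[L'] M,
      ∀ β (hβ : β < α), g ⟨e β, mem_SS_of_lt e hβ⟩ = hseq (L' := L') M e β := by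
  intro α
  induction α using Ordinal.induction with
  | h α IH =>
  intro hα
  rcases Ordinal.zero_or_succ_or_isSuccLimit α with rfl | ⟨β, rfl⟩ | hlim
  · obtain ⟨g⟩ := hbot
    exact ⟨g, fun β hβ => absurd hβ (not_lt_of_ge (zero_le (a := β)))⟩
  · rw [← Ordinal.add_one_eq_succ] at hα ⊢
    have hβ1 : β < o1 := lt_of_lt_of_le (ord_lt_add_one β) hα
    obtain ⟨g, hg⟩ := IH β (Order.lt_succ β) hβ1.le
    obtain ⟨g', hg'⟩ := hext β hβ1 g
    have hQ : ExtProp (L' := L') M e β (fun γ _ => hseq (L' := L') M e γ) :=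
      ⟨g', fun γ hγ => (hg' (e γ) (mem_SS_of_lt e hγ)).trans (hg γ hγ)⟩
    refine ⟨hQ.choose, fun γ hγ => ?_⟩
    have hγβ : γ ≤ β := by
      rwa [Ordinal.add_one_eq_succ, Order.lt_succ_iff] at hγ
    rcases lt_or_eq_of_le hγβ with hlt | rfl
    · exact hQ.choose_spec γ hlt
    · rw [hseq_eq (L' := L') M e γ, dif_pos hQ]
  · -- limit case
    have IH' : ∀ β (hβ : β < α), ∃ g : ↥(SS (L' := L') e β) ↪[L'] M,
        ∀ γ (hγ : γ < β), g ⟨e γ, mem_SS_of_lt e hγ⟩ = hseq (L' := L') M e γ :=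
      fun β hβ => IH β hβ (hβ.le.trans hα)
    choose gB hgB using IH'
    have cohere : ∀ β γ (hβγ : β ≤ γ) (hβ : β < α) (hγ : γ < α) (x : N)
        (hx : x ∈ SS (L' := L') e β),
        gB γ hγ ⟨x, SS_mono e hβγ hx⟩ = gB β hβ ⟨x, hx⟩ := by
      intro β γ hβγ hβ hγ x hx
      have heq : ((gB γ hγ).toHom.comp
          (Substructure.inclusion (SS_mono e hβγ)).toHom) = (gB β hβ).toHom := by
        apply Hom.eq_of_eqOn_dense (SS_gens_dense e β)
        rintro ⟨y, hy⟩ ⟨δ, hδ, hyδ⟩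
        simp only at hyδ
        subst hyδ
        show gB γ hγ (Substructure.inclusion (SS_mono e hβγ) ⟨e δ, hy⟩) = gB β hβ ⟨e δ, hy⟩
        have h1 : Substructure.inclusion (SS_mono (L' := L') e hβγ) ⟨e δ, hy⟩ =
            ⟨e δ, mem_SS_of_lt e (hδ.trans_le hβγ)⟩ := rfl
        rw [h1, hgB γ hγ δ (hδ.trans_le hβγ)]
        exact (hgB β hβ δ hδ).symm
      exact DFunLike.congr_fun heq ⟨x, hx⟩
    have memS : ∀ x : ↥(SS (L' := L') e α), ∃ β, β < α ∧ (x : N) ∈ SS (L' := L') e β := by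
      intro x
      have hx : (x : N) ∈ Substructure.closure L' (e '' Set.Iio α) := x.2
      refine Substructure.closure_induction hx (fun y hy => ?gen) ?fn
      case gen =>
        obtain ⟨δ, hδ, rfl⟩ := hy
        exact ⟨δ + 1, by rw [Ordinal.add_one_eq_succ]; exact hlim.succ_lt hδ,
          mem_SS_of_lt e (ord_lt_add_one δ)⟩
      case fn =>
        intro n F xs h
        choose b hb hmem using h
        refine ⟨Finset.univ.sup b, ?_, ?_⟩
        · exact (Finset.sup_lt_iff (by rw [Ordinal.bot_eq_zero]; exact hlim.pos)).2
            fun i _ => hb i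
        · exact Substructure.fun_mem _ F xs
            fun i => SS_mono e (Finset.le_sup (Finset.mem_univ i)) (hmem i)
    choose bidx hbidx hxmem using memS
    set φ : ↥(SS (L' := L') e α) → M :=
      fun x => gB (bidx x) (hbidx x) ⟨(x : N), hxmem x⟩ with hφ
    have welldef : ∀ (x : ↥(SS (L' := L') e α)) β (hβ : β < α)
        (hx : (x : N) ∈ SS (L' := L') e β), φ x = gB β hβ ⟨(x : N), hx⟩ := by
      intro x β hβ hx
      have h1 := cohere (bidx x) (max (bidx x) β) (le_max_left _ _) (hbidx x)
        (max_lt (hbidx x) hβ) x (hxmem x)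
      have h2 := cohere β (max (bidx x) β) (le_max_right _ _) hβ
        (max_lt (hbidx x) hβ) x hx
      exact h1.symm.trans h2
    have hinj : Function.Injective φ := by
      intro x y hxy
      have hγ : max (bidx x) (bidx y) < α := max_lt (hbidx x) (hbidx y)
      rw [welldef x _ hγ (SS_mono e (le_max_left _ _) (hxmem x)),
        welldef y _ hγ (SS_mono e (le_max_right _ _) (hxmem y))] at hxy
      have h3 := (gB _ hγ).injective hxy
      have h4 := congrArg Subtype.val h3
      exact Subtype.ext h4
    refine ⟨⟨⟨φ, hinj⟩, ?_, ?_⟩, ?_⟩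
    · intro n F xs
      have hγ : Finset.univ.sup (fun i => bidx (xs i)) < α :=
        (Finset.sup_lt_iff (by rw [Ordinal.bot_eq_zero]; exact hlim.pos)).2
          fun i _ => hbidx _
      set γ := Finset.univ.sup fun i => bidx (xs i)
      have hxi : ∀ i, (xs i : N) ∈ SS (L' := L') e γ :=
        fun i => SS_mono e (Finset.le_sup (Finset.mem_univ i)) (hxmem (xs i))
      have hmf : ((funMap F xs : ↥(SS (L' := L') e α)) : N) ∈ SS (L' := L') e γ :=
        Substructure.fun_mem _ F _ hxi
      show φ (funMap F xs) = funMap F (φ ∘ xs)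
      rw [welldef (funMap F xs) γ hγ hmf]
      have h2 : (⟨((funMap F xs : ↥(SS (L' := L') e α)) : N), hmf⟩ : ↥(SS (L' := L') e γ)) =
          funMap F fun i => ⟨(xs i : N), hxi i⟩ := rfl
      rw [h2, (gB γ hγ).map_fun]
      exact congrArg (funMap F) (funext fun i => ((welldef (xs i) γ hγ (hxi i)).symm :
        gB γ hγ ⟨(xs i : N), hxi i⟩ = φ (xs i)))
    · intro n r xs
      have hγ : Finset.univ.sup (fun i => bidx (xs i)) < α :=
        (Finset.sup_lt_iff (by rw [Ordinal.bot_eq_zero]; exact hlim.pos)).2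
          fun i _ => hbidx _
      set γ := Finset.univ.sup fun i => bidx (xs i)
      have hxi : ∀ i, (xs i : N) ∈ SS (L' := L') e γ :=
        fun i => SS_mono e (Finset.le_sup (Finset.mem_univ i)) (hxmem (xs i))
      have h := (gB γ hγ).map_rel r fun i => (⟨(xs i : N), hxi i⟩ : ↥(SS (L' := L') e γ))
      have e1 : (⇑(gB γ hγ) ∘ fun i => (⟨(xs i : N), hxi i⟩ : ↥(SS (L' := L') e γ))) =
          φ ∘ xs := funext fun i => (welldef (xs i) γ hγ (hxi i)).symm
      rw [e1] at h
      exact h.trans Iff.rfl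
    · intro β hβ
      have hβ1 : β + 1 < α := by rw [Ordinal.add_one_eq_succ]; exact hlim.succ_lt hβ
      exact (welldef ⟨e β, mem_SS_of_lt e hβ⟩ (β + 1) hβ1
        (mem_SS_of_lt e (ord_lt_add_one β))).trans (hgB (β + 1) hβ1 β (ord_lt_add_one β))

end Aux

/-- Assuming CH and (H), every `L`-structure of cardinality at most ℵ₁
all of whose small substructures lie in `K` embeds into a `K`-ℵ₁-saturated structure
of cardinality ℵ₁. -/
theorem statement_1 (L : FirstOrder.Language.{0, 0}) (hL : Countable L.Symbols)
    (K : Set (Bundled.{0} L.Structure))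
    (hCH : (2 : Cardinal.{0}) ^ (aleph0 : Cardinal.{0}) = aleph 1)
    (hK : HypH L K)
    (M : Type) [L.Structure M] (hM : KSat L K M) (hMcard : Cardinal.mk M = aleph 1)
    (N : Type) [L.Structure N] (hNcard : Cardinal.mk N ≤ aleph 1)
    (hNage : ∀ S : L.Substructure N, Cardinal.mk S < aleph 1 →
      (Bundled.of (↥S) : Bundled L.Structure) ∈ K) :
    Nonempty (N ↪[L] M) := by
  haveI := hL
  -- members of the age of `N` given by countable substructures
  have hKN : ∀ S : L.Substructure N, Countable ↥S →
      (Bundled.of ↥S : Bundled L.Structure) ∈ K := fun S hS =>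
    hNage S (lt_of_le_of_lt (@Cardinal.mk_le_aleph0 _ hS) Cardinal.aleph0_lt_aleph_one)
  -- the base embedding of the substructure generated by constants
  have hbotN_count : Countable ↥(⊥ : L.Substructure N) := by
    rw [← Substructure.closure_empty (L := L) (M := N)]
    exact (Set.countable_empty (α := N)).substructure_closure (L := L)
  have hbotM_count : Countable ↥(⊥ : L.Substructure M) := by
    rw [← Substructure.closure_empty (L := L) (M := M)]
    exact (Set.countable_empty (α := M)).substructure_closure (L := L)
  have hbotK_N : (Bundled.of ↥(⊥ : L.Substructure N) : Bundled L.Structure) ∈ K :=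
    hKN _ hbotN_count
  have hbotK_M : (Bundled.of ↥(⊥ : L.Substructure M) : Bundled L.Structure) ∈ K :=
    hM.1 ⊥ (lt_of_le_of_lt (@Cardinal.mk_le_aleph0 _ hbotM_count) Cardinal.aleph0_lt_aleph_one)
  obtain ⟨iso⟩ := hK.freeAmalg.1 _ hbotK_N _ hbotK_M
  have iso' : (⊥ : L.Substructure ↥(⊥ : L.Substructure N)) ≃[L]
      (⊥ : L.Substructure ↥(⊥ : L.Substructure M)) := iso
  let e₀ : ↥(⊥ : L.Substructure N) ↪[L] M :=
    (⊥ : L.Substructure M).subtype.comp <|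
      ((⊥ : L.Substructure ↥(⊥ : L.Substructure M)).subtype.comp iso'.toEmbedding).comp <|
        (Substructure.inclusion (bot_bot_eq_top (L' := L) N).ge).comp
          Substructure.topEquiv.symm.toEmbedding
  rcases isEmpty_or_nonempty N with hNe | hNne
  · have htop : (⊤ : L.Substructure N) ≤ ⊥ := fun x _ => isEmptyElim x
    exact ⟨e₀.comp ((Substructure.inclusion htop).comp Substructure.topEquiv.symm.toEmbedding)⟩
  · haveI : Nonempty M := Cardinal.mk_ne_zero_iff.1 (by
      rw [hMcard]; exact (Cardinal.aleph_pos 1).ne')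
    set o1 := (aleph 1).ord with ho1def
    have ho1 : Order.IsSuccLimit o1 := Cardinal.isSuccLimit_ord (Cardinal.aleph0_le_aleph 1)
    -- an enumeration of `N` indexed by ordinals below `ω₁`
    have hinj : Cardinal.mk N ≤ Cardinal.mk o1.ToType := by
      rw [Cardinal.mk_toType, ho1def, Cardinal.card_ord]; exact hNcard
    obtain ⟨j⟩ := (Cardinal.le_def _ _).1 hinj
    let e : Ordinal → N := fun β =>
      if h : β < o1 then Function.invFun j ((Ordinal.ToType.mk (o := o1)) ⟨β, h⟩)
      else Classical.arbitrary N
    have hesurj : ∀ n : N, ∃ β, β < o1 ∧ e β = n := by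
      intro n
      obtain ⟨x, hx⟩ := Function.invFun_surjective j.injective n
      have hb : (((Ordinal.ToType.mk (o := o1)).symm x : Set.Iio o1) : Ordinal) < o1 :=
        ((Ordinal.ToType.mk (o := o1)).symm x).2
      refine ⟨_, hb, ?_⟩
      simp only [e, dif_pos hb]
      change Function.invFun j (Ordinal.ToType.mk ((Ordinal.ToType.mk (o := o1)).symm x)) = n
      rw [OrderIso.apply_symm_apply]
      exact hx
    -- countability of the stages
    have hcount : ∀ α, α < o1 → Countable ↥(SS (L' := L) e α) := by
      intro α hα
      have h1 : (Set.Iio α).Countable := by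
        rw [← Set.countable_coe_iff, ← Cardinal.mk_le_aleph0_iff, Ordinal.mk_Iio_ordinal,
          Cardinal.lift_le_aleph0]
        rw [ho1def, Cardinal.lt_ord, ← Cardinal.succ_aleph0, Order.lt_succ_iff] at hα
        exact hα
      exact (h1.image e).substructure_closure (L := L)
    -- the extension property from `K`-ℵ₁-saturation
    have hext : ∀ α, α < o1 → ∀ g : ↥(SS (L' := L) e α) ↪[L] M,
        ∃ g' : ↥(SS (L' := L) e (α + 1)) ↪[L] M,
          ∀ (x : N) (hx : x ∈ SS (L' := L) e α),
            g' ⟨x, SS_mono e (ord_lt_add_one α).le hx⟩ = g ⟨x, hx⟩ := by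
      intro α hα g
      have hα1 : α + 1 < o1 := by rw [Ordinal.add_one_eq_succ]; exact ho1.succ_lt hα
      obtain ⟨g', hg'⟩ := hM.2 (Bundled.of ↥(SS (L' := L) e α)) (hKN _ (hcount α hα))
        (Bundled.of ↥(SS (L' := L) e (α + 1))) (hKN _ (hcount _ hα1)) g
        (Substructure.inclusion (SS_mono e (ord_lt_add_one α).le))
      exact ⟨g', fun x hx => hg' ⟨x, hx⟩⟩
    have hSS0 : SS (L' := L) e 0 = ⊥ := by
      show Substructure.closure L (e '' Set.Iio 0) = ⊥
      rw [show Set.Iio (0 : Ordinal) = ∅ from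
          Set.eq_empty_of_forall_notMem fun x hx => not_lt_of_ge (zero_le (a := x)) hx,
        Set.image_empty, Substructure.closure_empty]
    have hbot : Nonempty (↥(SS (L' := L) e 0) ↪[L] M) :=
      ⟨e₀.comp (Substructure.inclusion hSS0.le)⟩
    obtain ⟨g, -⟩ := inv_all M e ho1 hbot hext o1 le_rfl
    have hSStop : SS (L' := L) e o1 = ⊤ := by
      rw [eq_top_iff]
      intro n _
      obtain ⟨β, hβ, rfl⟩ := hesurj n
      exact mem_SS_of_lt e hβ
    exact ⟨g.comp ((Substructure.inclusion hSStop.ge).comp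
      Substructure.topEquiv.symm.toEmbedding)⟩

end FraisseFreeAmalg
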